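/- Let G = (V,E) be a finite simple graph, let I ⊆ V be a maximum independent set of G, and let k be an integer with k ≥ |V∖I|. Then the maximum of c(G,S) over all subsets S ⊆ V with |S| ≤ k equals α(G) = |I|. That is, under the budget k ≥ |V∖I|, the K-way vertex cut problem and the maximum independent set problem have the same optimal value. -/

import Mathlib

/-- The independence number `α(G)`: the maximum size of an independent set of `G`. -/
noncomputable def indepNum {V : Type*} [Fintype V] (G : SimpleGraph V) : ℕ :=
  sSup {n : ℕ | ∃ I : Finset V, (∀ u ∈ I, ∀ v ∈ I, u ≠ v → ¬ G.Adj u v) ∧ I.card = n}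

/-- If `I` is a maximum independent set of a finite simple graph `G` and
`k ≥ |V ∖ I|`, then the maximum of `c(G,S)` over all `S ⊆ V` with `|S| ≤ k` equals
`α(G) = |I|`: every such `S` yields at most `|I|` components and some such `S`
achieves exactly `|I|` components. -/
theorem kway_budget_eq_indepNum {V : Type*} [Fintype V] [DecidableEq V]
    (G : SimpleGraph V) (I : Finset V)
    (hIindep : ∀ u ∈ I, ∀ v ∈ I, u ≠ v → ¬ G.Adj u v)
    (hImax : I.card = indepNum G)
    (k : ℕ) (hk : (Finset.univ \ I).card ≤ k) :
    (∀ S : Finset V, S.card ≤ k →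
        Nat.card ((G.induce ((S : Set V)ᶜ)).ConnectedComponent) ≤ I.card) ∧
    (∃ S : Finset V, S.card ≤ k ∧
        Nat.card ((G.induce ((S : Set V)ᶜ)).ConnectedComponent) = I.card) := by
  classical
  have hbdd : BddAbove {n : ℕ | ∃ J : Finset V,
      (∀ u ∈ J, ∀ v ∈ J, u ≠ v → ¬ G.Adj u v) ∧ J.card = n} := by
    refine ⟨Fintype.card V, ?_⟩
    rintro n ⟨J, _, rfl⟩
    exact Finset.card_le_univ J
  constructor
  · intro S hS
    set H := G.induce ((S : Set V)ᶜ) with hH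
    haveI : Finite H.ConnectedComponent := Quot.finite _
    set rep : H.ConnectedComponent → V := fun c => (Quot.out c).1 with hrep
    have hinj : Function.Injective rep := by
      intro c d h
      have h2 : Quot.out c = Quot.out d := Subtype.ext h
      rw [← Quot.out_eq c, ← Quot.out_eq d, h2]
    set R : Finset V := (Set.finite_range rep).toFinset with hR
    have hcardR : R.card = Nat.card H.ConnectedComponent := by
      rw [hR, Set.Finite.card_toFinset, ← Nat.card_eq_fintype_card,
        Nat.card_range_of_injective hinj]
    have hRindep : ∀ u ∈ R, ∀ v ∈ R, u ≠ v → ¬ G.Adj u v := by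
      intro u hu v hv huv hadj
      rw [hR, Set.Finite.mem_toFinset] at hu hv
      obtain ⟨c, rfl⟩ := hu
      obtain ⟨d, rfl⟩ := hv
      have hadj' : H.Adj (Quot.out c) (Quot.out d) := hadj
      have : c = d := by
        rw [← Quot.out_eq c, ← Quot.out_eq d]
        exact SimpleGraph.ConnectedComponent.sound hadj'.reachable
      exact huv (by rw [this])
    have hmem : R.card ∈ {n : ℕ | ∃ J : Finset V,
        (∀ u ∈ J, ∀ v ∈ J, u ≠ v → ¬ G.Adj u v) ∧ J.card = n} := ⟨R, hRindep, rfl⟩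
    have := le_csSup hbdd hmem
    rw [hcardR] at this
    rw [hImax]
    exact this
  · refine ⟨Finset.univ \ I, hk, ?_⟩
    have hset : (((Finset.univ \ I : Finset V) : Set V))ᶜ = (I : Set V) := by
      ext x; simp
    rw [hset]
    have hbot : G.induce (I : Set V) = ⊥ := by
      ext a b
      simp only [SimpleGraph.comap_adj, SimpleGraph.bot_adj, iff_false]
      intro hadj
      exact hIindep a.1 (Finset.mem_coe.mp a.2) b.1 (Finset.mem_coe.mp b.2)
        (G.ne_of_adj hadj) hadj
    rw [hbot]
    have hbij : Function.Bijective
        ((⊥ : SimpleGraph (I : Set V)).connectedComponentMk) := by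
      constructor
      · intro a b hab
        have := (SimpleGraph.ConnectedComponent.eq).mp hab
        exact (SimpleGraph.reachable_bot).mp this
      · exact Quot.exists_rep
    rw [(Nat.card_eq_of_bijective _ hbij).symm, Nat.card_coe_set_eq,
      Set.ncard_coe_finset]
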